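/- The closed Alpha-Spending procedure uniformly improves the Alpha-Spending procedure: if (γ_i)_{i∈ℕ} is non-increasing and non-negative with Σγ_i ≤ 1, then for every realization of p-values (P_i) and every i ∈ ℕ, α·γ_{t(i)} ≥ α·γ_i, where t(i) = 1 + Σ_{j=1}^{i-1}(1 − r_j) with r_j = 1{P_j ≤ α·γ_{t(j)}} defined recursively; consequently every hypothesis rejected by Alpha-Spending (P_i ≤ α·γ_i) is rejected by closed Alpha-Spending (P_i ≤ α·γ_{t(i)}). -/

import Mathlib

open Classical in
theorem stmt11 (α : ℝ) (hα : 0 < α ∧ α < 1) (γ : ℕ → ℝ) (hγ : ∀ i, 0 ≤ γ i)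
    (hmono : Antitone γ) (hsum : ∑' i, γ i ≤ 1) (P : ℕ → ℝ) (t : ℕ → ℕ)
    (ht : ∀ i, t i = 1 + ∑ j ∈ Finset.Ico 1 i,
      (1 - (if P j ≤ α * γ (t j) then 1 else 0))) :
    ∀ i ≥ 1, α * γ i ≤ α * γ (t i) ∧ (P i ≤ α * γ i → P i ≤ α * γ (t i)) := by
  intro i hi
  have hle : t i ≤ i := by
    rw [ht i]
    calc 1 + ∑ j ∈ Finset.Ico 1 i, (1 - (if P j ≤ α * γ (t j) then 1 else 0))
        ≤ 1 + ∑ j ∈ Finset.Ico 1 i, 1 := by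
          gcongr with j hj
          split <;> omega
      _ = 1 + (i - 1) := by rw [Finset.sum_const, Nat.card_Ico, smul_eq_mul, mul_one]
      _ ≤ i := by omega
  have h : α * γ i ≤ α * γ (t i) :=
    mul_le_mul_of_nonneg_left (hmono hle) (le_of_lt hα.1)
  exact ⟨h, fun hp => le_trans hp h⟩
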